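/- Let P conform to the submodular function z on I, and let Q be a preorder with P ⪯ Q. Then Q conforms to z if and only if P ◀ Q. Equivalently, the set of preorders conforming to z that lie above P coincides with overline(P) = {Q : P ◀ Q}. -/

import Mathlib

open scoped Classical

/-- A preorder on `X`, bundled as a reflexive and transitive relation. -/
structure Preo (X : Type*) where
  le : X → X → Prop
  le_refl : ∀ x, le x x
  le_trans : ∀ {x y z}, le x y → le y z → le x z

namespace Preo

variable {X : Type*}

/-- The refinement partial order `P ⪯ Q` on preorders: `x ≤_P y` implies `x ≤_Q y`. -/
def Le (P Q : Preo X) : Prop := ∀ ⦃a b⦄, P.le a b → Q.le a b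

/-- The opposite preorder. -/
def op (P : Preo X) : Preo X where
  le a b := P.le b a
  le_refl x := P.le_refl x
  le_trans h h' := P.le_trans h' h

/-- The meet (pointwise intersection) of two preorders. -/
def meet (P Q : Preo X) : Preo X where
  le a b := P.le a b ∧ Q.le a b
  le_refl x := ⟨P.le_refl x, Q.le_refl x⟩
  le_trans h h' := ⟨P.le_trans h.1 h'.1, Q.le_trans h.2 h'.2⟩

/-- The join of two preorders: zigzag chains, i.e. the reflexive-transitive closure
of the union of the two relations. -/
def join (P Q : Preo X) : Preo X where
  le a b := Relation.ReflTransGen (fun u v => P.le u v ∨ Q.le u v) a b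
  le_refl _ := Relation.ReflTransGen.refl
  le_trans h h' := Relation.ReflTransGen.trans h h'

/-- The bubble relation: `a` and `b` lie in the same bubble of `P`. -/
def bubRel (P : Preo X) (a b : X) : Prop := P.le a b ∧ P.le b a

/-- `R ◁ P` : `R` is a subdivision of `P`, i.e. `R ⪯ P` and `R = P ∧ (P^op ∨ R)`. -/
def Subdiv (R P : Preo X) : Prop := R.Le P ∧ R = P.meet (P.op.join R)

/-- `P ◀ Q` : `Q` is a contraction of `P`, i.e. `P ⪯ Q` and `Q = P ∨ (P^op ∧ Q)`. -/
def Contr (P Q : Preo X) : Prop := P.Le Q ∧ Q = P.join (P.op.meet Q)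

/-- `K` is a convex subset for the preorder `P`. -/
def ConvexIn (P : Preo X) (K : Set X) : Prop :=
  ∀ ⦃x y z⦄, x ∈ K → y ∈ K → P.le x z → P.le z y → z ∈ K

/-- `K` is connected for (the restriction to `K` of) the preorder `P`:
any two of its elements are joined by a zigzag chain of comparabilities within `K`. -/
def ConnectedIn (P : Preo X) (K : Set X) : Prop :=
  ∀ ⦃x y⦄, x ∈ K → y ∈ K →
    Relation.ReflTransGen (fun u v => u ∈ K ∧ v ∈ K ∧ (P.le u v ∨ P.le v u)) x y

/-- A total preorder. -/
def Total (P : Preo X) : Prop := ∀ a b, P.le a b ∨ P.le b a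

/-- `L` is a linear extension of `P`: `L` is total, `P ⪯ L`, and the bubbles coincide. -/
def IsLinExt (P L : Preo X) : Prop :=
  L.Total ∧ P.Le L ∧ ∀ a b, P.bubRel a b ↔ L.bubRel a b

/-- A finite down-set of the preorder `P`. -/
def IsDownset (P : Preo X) (A : Finset X) : Prop :=
  ∀ ⦃x y⦄, y ∈ A → P.le x y → x ∈ A

/-- A convex finite subset of the preorder `P`. -/
def ConvexF (P : Preo X) (C : Finset X) : Prop :=
  ∀ ⦃x y z⦄, x ∈ C → y ∈ C → P.le x z → P.le z y → z ∈ C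

/-- The down-set generated by a finite set `C`. -/
noncomputable def downClosure [Fintype X] (P : Preo X) (C : Finset X) : Finset X :=
  Finset.univ.filter (fun x => ∃ y ∈ C, P.le x y)

/-- The bubble of an element `a`. -/
noncomputable def bubble [Fintype X] (P : Preo X) (a : X) : Finset X :=
  Finset.univ.filter (fun x => P.le a x ∧ P.le x a)

/-- The set of bubbles of `P`. -/
noncomputable def bubbles [Fintype X] (P : Preo X) : Finset (Finset X) :=
  Finset.univ.image (fun a => P.bubble a)

/-- `R` is a positive sub-preorder of `P`: in any loop
`x = x₀ ≤_R x₁ ≥_P x₂ ≤_R ⋯ ≤_R x_{2k-1} ≥_P x_{2k} = x`,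
every descending step `≥_P` is actually `≥_R`. -/
def PositiveSub (R P : Preo X) : Prop :=
  ∀ (k : ℕ) (x : ℕ → X), x (2 * k) = x 0 →
    (∀ i < k, R.le (x (2 * i)) (x (2 * i + 1))) →
    (∀ i < k, P.le (x (2 * i + 2)) (x (2 * i + 1))) →
    ∀ i < k, R.le (x (2 * i + 2)) (x (2 * i + 1))

end Preo

section Submod

variable {I : Type*} [Fintype I] [DecidableEq I]

/-- A function `z : P(I) → ℝ ∪ {∞}` is submodular if
`z(S ∪ T) + z(S ∩ T) ≤ z(S) + z(T)` for all `S, T`. -/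
def Submodular (z : Finset I → WithTop ℝ) : Prop :=
  ∀ S T : Finset I, z (S ∪ T) + z (S ∩ T) ≤ z S + z T

/-- The corestriction `z_{/A}` : `U ↦ z(A ∪ U) − z(A)` (meaningful when `z A ≠ ⊤`). -/
noncomputable def coRes (z : Finset I → WithTop ℝ) (A U : Finset I) : WithTop ℝ :=
  z (A ∪ U) + ((-(z A).untopD 0 : ℝ) : WithTop ℝ)

/-- The extended generalized permutahedron of `z`:
`x_I = z(I)` and `x_A ≤ z(A)` whenever `z(A) < ∞`. -/
def EGP (z : Finset I → WithTop ℝ) : Set (I → ℝ) :=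
  {x | ((∑ i, x i : ℝ) : WithTop ℝ) = z Finset.univ ∧
       ∀ A : Finset I, ((∑ i ∈ A, x i : ℝ) : WithTop ℝ) ≤ z A}

/-- `z` restricted to subsets of `C` decomposes as the product of its restrictions to `S`
and `T`, where `C = S ⊔ T`. -/
def SplitsAlong (z : Finset I → WithTop ℝ) (C S T : Finset I) : Prop :=
  Disjoint S T ∧ S ∪ T = C ∧ ∀ E ⊆ C, z E = z (E ∩ S) + z (E ∩ T)

/-- `z` restricted to subsets of `C` is indecomposable. -/
def IndecompOn (z : Finset I → WithTop ℝ) (C : Finset I) : Prop :=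
  ∀ S T : Finset I, S.Nonempty → T.Nonempty → ¬ SplitsAlong z C S T

/-- `fam` is the partition underlying a factorization of `z` into indecomposable
extended Boolean functions. -/
def IsIndecompFactorization (z : Finset I → WithTop ℝ) (fam : Finset (Finset I)) : Prop :=
  (∀ B ∈ fam, B.Nonempty) ∧
  (∀ B ∈ fam, ∀ B' ∈ fam, B ≠ B' → Disjoint B B') ∧
  fam.sup id = Finset.univ ∧
  (∀ E : Finset I, z E = ∑ B ∈ fam, z (E ∩ B)) ∧
  ∀ B ∈ fam, IndecompOn z B

/-- A family of finite subsets of `I` forming a topology on `I`. -/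
def IsTopologyFam (F : Set (Finset I)) : Prop :=
  ∅ ∈ F ∧ Finset.univ ∈ F ∧ (∀ A ∈ F, ∀ B ∈ F, A ∪ B ∈ F) ∧ ∀ A ∈ F, ∀ B ∈ F, A ∩ B ∈ F

/-- The preorder `P` is compatible with the submodular function `z`. -/
def Compatible (z : Finset I → WithTop ℝ) (P : Preo I) : Prop :=
  (∀ A : Finset I, P.IsDownset A → z A ≠ ⊤) ∧
  ∀ A B : Finset I, P.IsDownset A → P.IsDownset B → A ⊆ B →
    ∀ C₁ C₂ : Finset I, Disjoint C₁ C₂ → C₁ ∪ C₂ = B \ A →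
      (∀ x ∈ C₁, ∀ y ∈ C₂, ¬ P.le x y ∧ ¬ P.le y x) →
      ∀ U ⊆ B \ A, coRes z A U = coRes z A (U ∩ C₁) + coRes z A (U ∩ C₂)

/-- For a convex subset `C` of `P`, the function `z_C : U ↦ z(A ∪ U) − z(A)`, where
`A = (↓C) \ C` with `↓C` the down-set generated by `C`. -/
noncomputable def zConv (z : Finset I → WithTop ℝ) (P : Preo I) (C U : Finset I) :
    WithTop ℝ :=
  coRes z (P.downClosure C \ C) U

/-- The preorder `P` conforms to the submodular function `z`: it is compatible with `z`
and every product decomposition of `z_C`, for `C` convex in `P`, comes from a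
disconnected decomposition of the preorder induced on `C`. -/
def Conforms (z : Finset I → WithTop ℝ) (P : Preo I) : Prop :=
  Compatible z P ∧
  ∀ C : Finset I, P.ConvexF C →
    ∀ C₁ C₂ : Finset I, Disjoint C₁ C₂ → C₁ ∪ C₂ = C →
      (∀ U ⊆ C, zConv z P C U = zConv z P C (U ∩ C₁) + zConv z P C (U ∩ C₂)) →
      ∀ x ∈ C₁, ∀ y ∈ C₂, ¬ P.le x y ∧ ¬ P.le y x

/-- The preorder `pre(z)` associated to `z`: `x ≤ y` iff every `A` with `z(A) < ∞`
("open set") containing `y` contains `x`. -/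
def preZ (z : Finset I → WithTop ℝ) : Preo I where
  le x y := ∀ A : Finset I, z A ≠ ⊤ → y ∈ A → x ∈ A
  le_refl _ := fun _ _ h => h
  le_trans h h' := fun A hA hy => h A hA (h' A hA hy)

/-- The preorder associated (by the Alexandroff correspondence) to a family of subsets. -/
def preOfFam (F : Set (Finset I)) : Preo I where
  le x y := ∀ A ∈ F, y ∈ A → x ∈ A
  le_refl _ := fun _ _ h => h
  le_trans h h' := fun A hA hy => h A hA (h' A hA hy)

/-- `Alin(P, z)`: the affine space cut out by `x_A = z(A)` for `A` a down-set of `P`. -/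
def Alin (z : Finset I → WithTop ℝ) (P : Preo I) : Set (I → ℝ) :=
  {x | ∀ A : Finset I, P.IsDownset A → ((∑ i ∈ A, x i : ℝ) : WithTop ℝ) = z A}

/-- `AlinBu(P, z)`: the affine space cut out by `x_C = z_C(C)` for `C` a bubble of `P`. -/
def AlinBu (z : Finset I → WithTop ℝ) (P : Preo I) : Set (I → ℝ) :=
  {x | ∀ a : I, ((∑ i ∈ P.bubble a, x i : ℝ) : WithTop ℝ) = zConv z P (P.bubble a) (P.bubble a)}

/-- `Φ_z(P)`: the (possibly empty) face of `Π(z)` cut out by the equalities `x_A = z(A)`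
for `A` a down-set of `P`. -/
def Phi (z : Finset I → WithTop ℝ) (P : Preo I) : Set (I → ℝ) :=
  {x | x ∈ EGP z ∧ ∀ A : Finset I, P.IsDownset A → ((∑ i ∈ A, x i : ℝ) : WithTop ℝ) = z A}

/-- `Ψ_z(G)`: the family of sets `A` with `z(A) < ∞` on which `x_A = z(A)` for all `x ∈ G`. -/
def PsiFam (z : Finset I → WithTop ℝ) (G : Set (I → ℝ)) : Set (Finset I) :=
  {A | z A ≠ ⊤ ∧ ∀ x ∈ G, ((∑ i ∈ A, x i : ℝ) : WithTop ℝ) = z A}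

/-- `Ψ_z(G)` as a preorder. -/
def PsiPre (z : Finset I → WithTop ℝ) (G : Set (I → ℝ)) : Preo I :=
  preOfFam (PsiFam z G)

/-- `z_P = ∏_{C ∈ b(P)} z_C`: the product over all bubbles of `P`. -/
noncomputable def zP (z : Finset I → WithTop ℝ) (P : Preo I) : Finset I → WithTop ℝ :=
  fun E => ∑ C ∈ P.bubbles, zConv z P C (E ∩ C)

/-- The restriction `z|_S` of `z` to subsets of `S`. -/
def restrictFn (z : Finset I → WithTop ℝ) (S : Finset I) :
    Finset {x : I // x ∈ S} → WithTop ℝ :=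
  fun U => z (U.map (Function.Embedding.subtype fun x => x ∈ S))

/-- The corestriction `z_{/S}` of `z`, on subsets of `I ∖ S`. -/
noncomputable def coresFn (z : Finset I → WithTop ℝ) (S : Finset I) :
    Finset {x : I // x ∉ S} → WithTop ℝ :=
  fun U => z (S ∪ U.map (Function.Embedding.subtype fun x => x ∉ S)) +
    ((-(z S).untopD 0 : ℝ) : WithTop ℝ)

/-- The restriction `P|_S` of a preorder to `S`. -/
def restrictPre (P : Preo I) (S : Finset I) : Preo {x : I // x ∈ S} where
  le a b := P.le a b
  le_refl a := P.le_refl a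
  le_trans h h' := P.le_trans h h'

/-- The corestriction `P_{/S}` of a preorder, on `I ∖ S`. -/
def coresPre (P : Preo I) (S : Finset I) : Preo {x : I // x ∉ S} where
  le a b := P.le a b
  le_refl a := P.le_refl a
  le_trans h h' := P.le_trans h h'

end Submod
set_option linter.unusedSectionVars false
section Proof14

variable {I : Type*} [Fintype I] [DecidableEq I]

theorem Preo.ext' {X : Type*} {P Q : Preo X} (h : ∀ a b, P.le a b ↔ Q.le a b) : P = Q := by
  obtain ⟨p, hp1, hp2⟩ := P
  obtain ⟨q, hq1, hq2⟩ := Q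
  have : p = q := funext fun a => funext fun b => propext (h a b)
  subst this
  rfl

theorem mem_downClosure' {P : Preo I} {C : Finset I} {x : I} :
    x ∈ P.downClosure C ↔ ∃ y ∈ C, P.le x y := by
  simp [Preo.downClosure]

theorem mem_bubble' {P : Preo I} {a x : I} :
    x ∈ P.bubble a ↔ P.le a x ∧ P.le x a := by
  simp [Preo.bubble]

theorem downset_mono {P Q : Preo I} (hPQ : P.Le Q) {A : Finset I} (h : Q.IsDownset A) :
    P.IsDownset A := fun _ _ hy hxy => h hy (hPQ hxy)

theorem convexF_mono {P Q : Preo I} (hPQ : P.Le Q) {C : Finset I} (h : Q.ConvexF C) :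
    P.ConvexF C := fun _ _ _ hx hy h1 h2 => h hx hy (hPQ h1) (hPQ h2)

theorem downClosure_isDownset {Q : Preo I} {C : Finset I} : Q.IsDownset (Q.downClosure C) := by
  intro x y hy hxy
  rw [mem_downClosure'] at hy ⊢
  obtain ⟨c, hc, hyc⟩ := hy
  exact ⟨c, hc, Q.le_trans hxy hyc⟩

theorem subset_downClosure {Q : Preo I} {C : Finset I} : C ⊆ Q.downClosure C :=
  fun x hx => mem_downClosure'.mpr ⟨x, hx, Q.le_refl x⟩

theorem sdiff_downClosure_isDownset {Q : Preo I} {C : Finset I} (hC : Q.ConvexF C) :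
    Q.IsDownset (Q.downClosure C \ C) := by
  intro x y hy hxy
  rw [Finset.mem_sdiff] at hy ⊢
  obtain ⟨c, hc, hyc⟩ := mem_downClosure'.mp hy.1
  exact ⟨downClosure_isDownset hy.1 hxy, fun hxC => hy.2 (hC hxC hc hxy hyc)⟩

theorem compatible_mono {z : Finset I → WithTop ℝ} {P Q : Preo I}
    (hP1 : Compatible z P) (hPQ : P.Le Q) : Compatible z Q := by
  constructor
  · intro A hA; exact hP1.1 A (downset_mono hPQ hA)
  · intro A B hA hB hAB C₁ C₂ hd hu hinc U hU
    exact hP1.2 A B (downset_mono hPQ hA) (downset_mono hPQ hB) hAB C₁ C₂ hd hu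
      (fun x hx y hy => ⟨fun h => (hinc x hx y hy).1 (hPQ h),
        fun h => (hinc x hx y hy).2 (hPQ h)⟩) U hU

theorem decomp_supply {z : Finset I → WithTop ℝ} {P Q : Preo I}
    (hP1 : Compatible z P) (hPQ : P.Le Q) {C : Finset I} (hC : Q.ConvexF C)
    {C₁ C₂ : Finset I} (hd : Disjoint C₁ C₂) (hu : C₁ ∪ C₂ = C)
    (hinc : ∀ x ∈ C₁, ∀ y ∈ C₂, ¬P.le x y ∧ ¬P.le y x) :
    ∀ U ⊆ C, zConv z Q C U = zConv z Q C (U ∩ C₁) + zConv z Q C (U ∩ C₂) := by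
  intro U hU
  have hBA : Q.downClosure C \ (Q.downClosure C \ C) = C := by
    rw [Finset.sdiff_sdiff_self_left]
    exact Finset.inter_eq_right.mpr subset_downClosure
  exact hP1.2 (Q.downClosure C \ C) (Q.downClosure C)
    (downset_mono hPQ (sdiff_downClosure_isDownset hC))
    (downset_mono hPQ downClosure_isDownset)
    Finset.sdiff_subset
    C₁ C₂ hd (by rw [hu, hBA]) hinc U (by rw [hBA]; exact hU)

end Proof14

section Proof14b
set_option linter.unusedSectionVars false

variable {I : Type*} [Fintype I] [DecidableEq I]

theorem zConv_transfer {z : Finset I → WithTop ℝ} {P Q : Preo I}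
    (hP1 : Compatible z P) (hPQ : P.Le Q) {C : Finset I} (hC : Q.ConvexF C) :
    ∀ V ⊆ C, zConv z Q C V = zConv z P C V := by
  intro V hV
  set AP := P.downClosure C \ C with hAPdef
  set AQ := Q.downClosure C \ C with hAQdef
  set B := Q.downClosure C with hBdef
  set D := AQ \ AP with hDdef
  have hCP : P.ConvexF C := convexF_mono hPQ hC
  have hAPd : P.IsDownset AP := sdiff_downClosure_isDownset hCP
  have hBd : P.IsDownset B := downset_mono hPQ downClosure_isDownset
  have hAQd : P.IsDownset AQ := downset_mono hPQ (sdiff_downClosure_isDownset hC)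
  have hAPAQ : AP ⊆ AQ := by
    intro x hx
    rw [hAPdef, Finset.mem_sdiff] at hx
    rw [hAQdef, Finset.mem_sdiff]
    obtain ⟨c, hc, hxc⟩ := mem_downClosure'.mp hx.1
    exact ⟨mem_downClosure'.mpr ⟨c, hc, hPQ hxc⟩, hx.2⟩
  have hAQB : AQ ⊆ B := Finset.sdiff_subset
  have hsplit : D ∪ C = B \ AP := by
    ext x
    simp only [hDdef, hAQdef, hAPdef, Finset.mem_union, Finset.mem_sdiff]
    constructor
    · rintro (⟨⟨hxB, hxC⟩, hxAP⟩ | hxC)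
      · exact ⟨hxB, hxAP⟩
      · exact ⟨subset_downClosure hxC, fun h => h.2 hxC⟩
    · rintro ⟨hxB, hxAP⟩
      by_cases hxC : x ∈ C
      · exact Or.inr hxC
      · exact Or.inl ⟨⟨hxB, hxC⟩, hxAP⟩
  have hdisjDC : Disjoint D C :=
    Disjoint.mono_left Finset.sdiff_subset Finset.sdiff_disjoint
  have hincDC : ∀ d ∈ D, ∀ c ∈ C, ¬P.le d c ∧ ¬P.le c d := by
    intro d hd c hc
    rw [hDdef, Finset.mem_sdiff] at hd
    have hdAQ := hd.1
    rw [hAQdef, Finset.mem_sdiff] at hdAQ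
    constructor
    · intro h
      refine hd.2 ?_
      rw [hAPdef, Finset.mem_sdiff]
      exact ⟨mem_downClosure'.mpr ⟨c, hc, h⟩, hdAQ.2⟩
    · intro h
      obtain ⟨c', hc', hdc'⟩ := mem_downClosure'.mp hdAQ.1
      exact hdAQ.2 (hC hc hc' (hPQ h) hdc')
  have key0 := hP1.2 AP B hAPd hBd (hAPAQ.trans hAQB) D C hdisjDC hsplit hincDC
    (D ∪ V) (by rw [← hsplit]; exact Finset.union_subset_union_right hV)
  have hi1 : (D ∪ V) ∩ D = D := Finset.union_inter_cancel_left
  have hi2 : (D ∪ V) ∩ C = V := by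
    ext x
    simp only [Finset.mem_inter, Finset.mem_union]
    constructor
    · rintro ⟨hx1 | hx2, hxC⟩
      · exact absurd hxC (Finset.disjoint_left.mp hdisjDC hx1)
      · exact hx2
    · intro hx
      exact ⟨Or.inr hx, hV hx⟩
  rw [hi1, hi2] at key0
  have hAPD : AP ∪ D = AQ := Finset.union_sdiff_of_subset hAPAQ
  obtain ⟨p, hp⟩ := WithTop.ne_top_iff_exists.mp (hP1.1 AP hAPd)
  obtain ⟨q, hq⟩ := WithTop.ne_top_iff_exists.mp (hP1.1 AQ hAQd)
  have hup : (z AP).untopD 0 = p := by rw [← hp]; rfl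
  have huq : (z AQ).untopD 0 = q := by rw [← hq]; rfl
  -- rewrite key0
  unfold coRes at key0
  rw [← Finset.union_assoc, hAPD, hup, ← hq] at key0
  -- goal
  show coRes z AQ V = coRes z AP V
  unfold coRes
  rw [hup, huq]
  have c0 : ((↑q + ((-p : ℝ) : WithTop ℝ)) + ((p - q : ℝ) : WithTop ℝ)) = (0 : WithTop ℝ) := by
    have h0 : q + -p + (p - q) = (0 : ℝ) := by ring
    exact_mod_cast h0
  have e : ((-q : ℝ) : WithTop ℝ) = ((-p : ℝ) : WithTop ℝ) + ((p - q : ℝ) : WithTop ℝ) := by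
    have h0 : (-q : ℝ) = -p + (p - q) := by ring
    exact_mod_cast h0
  rw [e, ← add_assoc, key0, add_comm ((q : WithTop ℝ) + ((-p : ℝ) : WithTop ℝ)),
    add_assoc, c0, add_zero]

end Proof14b

section Proof14c
set_option linter.unusedSectionVars false

variable {I : Type*} [Fintype I] [DecidableEq I]

theorem join_le_of_le {P Q : Preo I} (hPQ : P.Le Q) {a b : I}
    (h : (P.join (P.op.meet Q)).le a b) : Q.le a b := by
  have h' : Relation.ReflTransGen (fun u v => P.le u v ∨ (P.op.meet Q).le u v) a b := h
  clear h
  induction h' with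
  | refl => exact Q.le_refl _
  | tail _ hst ih =>
    rcases hst with h1 | h1
    · exact Q.le_trans ih (hPQ h1)
    · exact Q.le_trans ih h1.2

theorem cross_incomp_of_le {P Q : Preo I} (hPQ : P.Le Q)
    (hQeq : Q = P.join (P.op.meet Q)) {C C₁ C₂ : Finset I}
    (hC : Q.ConvexF C) (hd : Disjoint C₁ C₂) (hu : C₁ ∪ C₂ = C)
    (hinc : ∀ x ∈ C₁, ∀ y ∈ C₂, ¬P.le x y ∧ ¬P.le y x)
    {x y : I} (hx : x ∈ C₁) (hy : y ∈ C₂) : ¬Q.le x y := by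
  intro hxy
  have hstep : ∀ {u v}, (P.le u v ∨ (P.op.meet Q).le u v) → Q.le u v := by
    rintro u v (h | h)
    · exact hPQ h
    · exact h.2
  have hrtg : ∀ {u v}, Relation.ReflTransGen
      (fun u v => P.le u v ∨ (P.op.meet Q).le u v) u v → Q.le u v := by
    intro u v h
    induction h with
    | refl => exact Q.le_refl _
    | tail _ hst ih => exact Q.le_trans ih (hstep hst)
  have hchain : Relation.ReflTransGen (fun u v => P.le u v ∨ (P.op.meet Q).le u v) x y := by
    have h := hxy
    rw [hQeq] at h
    exact h
  have hxC : x ∈ C := by rw [← hu]; exact Finset.mem_union_left _ hx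
  have hyC : y ∈ C := by rw [← hu]; exact Finset.mem_union_right _ hy
  have main : ∀ {v}, Relation.ReflTransGen
      (fun u v => P.le u v ∨ (P.op.meet Q).le u v) x v → Q.le v y → v ∈ C₁ := by
    intro v h
    induction h with
    | refl => exact fun _ => hx
    | @tail w v hxw hwv ih =>
      intro hvy
      have hwC₁ : w ∈ C₁ := ih (Q.le_trans (hstep hwv) hvy)
      have hvC : v ∈ C := hC hxC hyC (Q.le_trans (hrtg hxw) (hstep hwv)) hvy
      have hvC' : v ∈ C₁ ∪ C₂ := by rw [hu]; exact hvC
      rcases Finset.mem_union.mp hvC' with h1 | h2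
      · exact h1
      · exfalso
        rcases hwv with hp | hr
        · exact (hinc _ hwC₁ _ h2).1 hp
        · exact (hinc _ hwC₁ _ h2).2 hr.1
  exact (Finset.disjoint_left.mp hd (main hchain (Q.le_refl y))) hy

theorem bubble_join {z : Finset I → WithTop ℝ} {P Q : Preo I}
    (hP1 : Compatible z P) (hPQ : P.Le Q) (hQ : Conforms z Q)
    {c a b : I} (ha : a ∈ Q.bubble c) (hb : b ∈ Q.bubble c) :
    Relation.ReflTransGen (fun u v => P.le u v ∨ (P.op.meet Q).le u v) a b := by
  set β := Q.bubble c with hβdef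
  have hβmem : ∀ {x : I}, x ∈ β ↔ Q.le c x ∧ Q.le x c := fun {x} => mem_bubble'
  have hconv : Q.ConvexF β := by
    intro u v t hu hv h1 h2
    exact hβmem.mpr ⟨Q.le_trans (hβmem.mp hu).1 h1, Q.le_trans h2 (hβmem.mp hv).2⟩
  set Conn : I → I → Prop := fun u v => u ∈ β ∧ v ∈ β ∧ (P.le u v ∨ P.le v u) with hConndef
  set C₁ := β.filter (fun x => Relation.ReflTransGen Conn a x) with hC₁def
  have hC₁β : C₁ ⊆ β := Finset.filter_subset _ _
  have haC₁ : a ∈ C₁ := Finset.mem_filter.mpr ⟨ha, Relation.ReflTransGen.refl⟩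
  have hcross : ∀ x ∈ C₁, ∀ y ∈ β \ C₁, ¬P.le x y ∧ ¬P.le y x := by
    intro x hx y hy
    rw [Finset.mem_sdiff] at hy
    constructor
    · intro h
      exact hy.2 (Finset.mem_filter.mpr ⟨hy.1,
        (Finset.mem_filter.mp hx).2.tail ⟨hC₁β hx, hy.1, Or.inl h⟩⟩)
    · intro h
      exact hy.2 (Finset.mem_filter.mpr ⟨hy.1,
        (Finset.mem_filter.mp hx).2.tail ⟨hC₁β hx, hy.1, Or.inr h⟩⟩)
  have hdis : Disjoint C₁ (β \ C₁) := Finset.disjoint_sdiff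
  have huni : C₁ ∪ (β \ C₁) = β := Finset.union_sdiff_of_subset hC₁β
  have hQinc := hQ.2 β hconv C₁ (β \ C₁) hdis huni
    (decomp_supply hP1 hPQ hconv hdis huni hcross)
  have hbC₁ : b ∈ C₁ := by
    by_contra hbn
    exact (hQinc a haC₁ b (Finset.mem_sdiff.mpr ⟨hb, hbn⟩)).1
      (Q.le_trans (hβmem.mp ha).2 (hβmem.mp hb).1)
  have key : ∀ {v : I}, Relation.ReflTransGen Conn a v →
      Relation.ReflTransGen (fun u v => P.le u v ∨ (P.op.meet Q).le u v) a v := by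
    intro v h
    induction h with
    | refl => exact Relation.ReflTransGen.refl
    | tail _ hst ih =>
      rcases hst.2.2 with h1 | h1
      · exact ih.tail (Or.inl h1)
      · exact ih.tail (Or.inr ⟨h1, Q.le_trans (hβmem.mp hst.1).2 (hβmem.mp hst.2.1).1⟩)
  exact key (Finset.mem_filter.mp hbC₁).2

end Proof14c

section Proof14d
set_option linter.unusedSectionVars false

variable {I : Type*} [Fintype I] [DecidableEq I]

theorem le_join_of_conforms {z : Finset I → WithTop ℝ} {P Q : Preo I}
    (hP1 : Compatible z P) (hPQ : P.Le Q) (hQ : Conforms z Q) :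
    ∀ a b, Q.le a b →
      Relation.ReflTransGen (fun u v => P.le u v ∨ (P.op.meet Q).le u v) a b := by
  suffices H : ∀ n, ∀ a b, Q.le a b →
      (Finset.univ.filter (fun x => Q.le a x ∧ Q.le x b)).card ≤ n →
      Relation.ReflTransGen (fun u v => P.le u v ∨ (P.op.meet Q).le u v) a b by
    intro a b h
    exact H _ a b h le_rfl
  intro n
  induction n with
  | zero =>
    intro a b h hcard
    exfalso
    have hmem : a ∈ Finset.univ.filter (fun x => Q.le a x ∧ Q.le x b) :=
      Finset.mem_filter.mpr ⟨Finset.mem_univ a, Q.le_refl a, h⟩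
    have := Finset.card_pos.mpr ⟨a, hmem⟩
    omega
  | succ n ih =>
    intro a b hab hcard
    by_cases hba : Q.le b a
    · exact bubble_join hP1 hPQ hQ (c := a)
        (mem_bubble'.mpr ⟨Q.le_refl a, Q.le_refl a⟩) (mem_bubble'.mpr ⟨hab, hba⟩)
    set C := Finset.univ.filter (fun x => Q.le a x ∧ Q.le x b) with hCdef
    have hmemC : ∀ {x : I}, x ∈ C ↔ Q.le a x ∧ Q.le x b := by
      intro x
      simp [hCdef]
    have haC : a ∈ C := hmemC.mpr ⟨Q.le_refl a, hab⟩
    have hbC : b ∈ C := hmemC.mpr ⟨hab, Q.le_refl b⟩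
    by_cases hmid : ∃ x ∈ C, ¬Q.bubRel a x ∧ ¬Q.bubRel x b
    · obtain ⟨x, hxC, hx1, hx2⟩ := hmid
      have hax : Q.le a x := (hmemC.mp hxC).1
      have hxb : Q.le x b := (hmemC.mp hxC).2
      have hsub1 : Finset.univ.filter (fun t => Q.le a t ∧ Q.le t x) ⊆ C := by
        intro t ht
        rw [Finset.mem_filter] at ht
        exact hmemC.mpr ⟨ht.2.1, Q.le_trans ht.2.2 hxb⟩
      have hb1 : b ∉ Finset.univ.filter (fun t => Q.le a t ∧ Q.le t x) := by
        intro hbm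
        exact hx2 ⟨hxb, (Finset.mem_filter.mp hbm).2.2⟩
      have hcard1 : (Finset.univ.filter (fun t => Q.le a t ∧ Q.le t x)).card ≤ n := by
        have := Finset.card_lt_card ((Finset.ssubset_iff_of_subset hsub1).mpr ⟨b, hbC, hb1⟩)
        omega
      have hsub2 : Finset.univ.filter (fun t => Q.le x t ∧ Q.le t b) ⊆ C := by
        intro t ht
        rw [Finset.mem_filter] at ht
        exact hmemC.mpr ⟨Q.le_trans hax ht.2.1, ht.2.2⟩
      have ha2 : a ∉ Finset.univ.filter (fun t => Q.le x t ∧ Q.le t b) := by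
        intro ham
        exact hx1 ⟨hax, (Finset.mem_filter.mp ham).2.1⟩
      have hcard2 : (Finset.univ.filter (fun t => Q.le x t ∧ Q.le t b)).card ≤ n := by
        have := Finset.card_lt_card ((Finset.ssubset_iff_of_subset hsub2).mpr ⟨a, haC, ha2⟩)
        omega
      exact (ih a x hax hcard1).trans (ih x b hxb hcard2)
    · push_neg at hmid
      have hmid' : ∀ x ∈ C, ¬Q.bubRel a x → Q.bubRel x b := hmid
      have hconv : Q.ConvexF C := by
        intro u v t hu hv h1 h2
        exact hmemC.mpr ⟨Q.le_trans (hmemC.mp hu).1 h1, Q.le_trans h2 (hmemC.mp hv).2⟩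
      set Conn : I → I → Prop := fun u v => u ∈ C ∧ v ∈ C ∧ (P.le u v ∨ P.le v u)
        with hConndef
      set C₁ := C.filter (fun x => Relation.ReflTransGen Conn a x) with hC₁def
      have hC₁C : C₁ ⊆ C := Finset.filter_subset _ _
      have haC₁ : a ∈ C₁ := Finset.mem_filter.mpr ⟨haC, Relation.ReflTransGen.refl⟩
      have hcross : ∀ x ∈ C₁, ∀ y ∈ C \ C₁, ¬P.le x y ∧ ¬P.le y x := by
        intro x hx y hy
        rw [Finset.mem_sdiff] at hy
        constructor
        · intro h
          exact hy.2 (Finset.mem_filter.mpr ⟨hy.1,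
            (Finset.mem_filter.mp hx).2.tail ⟨hC₁C hx, hy.1, Or.inl h⟩⟩)
        · intro h
          exact hy.2 (Finset.mem_filter.mpr ⟨hy.1,
            (Finset.mem_filter.mp hx).2.tail ⟨hC₁C hx, hy.1, Or.inr h⟩⟩)
      have hdis : Disjoint C₁ (C \ C₁) := Finset.disjoint_sdiff
      have huni : C₁ ∪ (C \ C₁) = C := Finset.union_sdiff_of_subset hC₁C
      have hQinc := hQ.2 C hconv C₁ (C \ C₁) hdis huni
        (decomp_supply hP1 hPQ hconv hdis huni hcross)
      have hbC₁ : b ∈ C₁ := by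
        by_contra hbn
        exact (hQinc a haC₁ b (Finset.mem_sdiff.mpr ⟨hbC, hbn⟩)).1 hab
      have key : ∀ {v : I}, Relation.ReflTransGen Conn a v →
          (Q.bubRel a v ∨ Relation.ReflTransGen
            (fun u v => P.le u v ∨ (P.op.meet Q).le u v) a v) := by
        intro v h
        induction h with
        | refl => exact Or.inl ⟨Q.le_refl a, Q.le_refl a⟩
        | @tail w v _ hst ihk =>
          obtain ⟨hwC, hvC, hcomp⟩ := hst
          by_cases hav : Q.bubRel a v
          · exact Or.inl hav
          right
          have hvb : Q.bubRel v b := hmid' v hvC hav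
          by_cases haw : Q.bubRel a w
          · rcases hcomp with h1 | h1
            · have h2 : Relation.ReflTransGen
                  (fun u v => P.le u v ∨ (P.op.meet Q).le u v) a w :=
                bubble_join hP1 hPQ hQ (c := a)
                  (mem_bubble'.mpr ⟨Q.le_refl a, Q.le_refl a⟩) (mem_bubble'.mpr haw)
              exact h2.tail (Or.inl h1)
            · exact absurd ⟨(hmemC.mp hvC).1, Q.le_trans (hPQ h1) haw.2⟩ hav
          · have hwb : Q.bubRel w b := hmid' w hwC haw
            have h1 := ihk.resolve_left haw
            have h2 : Relation.ReflTransGen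
                (fun u v => P.le u v ∨ (P.op.meet Q).le u v) w v :=
              bubble_join hP1 hPQ hQ (c := b)
                (mem_bubble'.mpr ⟨hwb.2, hwb.1⟩) (mem_bubble'.mpr ⟨hvb.2, hvb.1⟩)
            exact h1.trans h2
      exact (key (Finset.mem_filter.mp hbC₁).2).resolve_left (fun h => hba h.2)

end Proof14d



/-- Let `P` conform to the submodular function `z` and let `P ⪯ Q`.
Then `Q` conforms to `z` iff `P ◀ Q`; i.e. the conforming preorders above `P` are
exactly `overline(P)`. -/
theorem conforming_above_iff_contraction
    {I : Type*} [Fintype I] [DecidableEq I]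
    (z : Finset I → WithTop ℝ) (hz0 : z ∅ = 0) (hzI : z Finset.univ ≠ ⊤)
    (hsub : Submodular z) (P Q : Preo I) (hP : Conforms z P) (hPQ : P.Le Q) :
    Conforms z Q ↔ Preo.Contr P Q := by
  constructor
  · intro hQ
    refine ⟨hPQ, Preo.ext' ?_⟩
    intro a b
    constructor
    · exact le_join_of_conforms hP.1 hPQ hQ a b
    · exact fun h => join_le_of_le hPQ h
  · intro hcontr
    constructor
    · exact compatible_mono hP.1 hPQ
    · intro C hCconv C₁ C₂ hd hu hdec x hx y hy
      have hdecP : ∀ U ⊆ C, zConv z P C U = zConv z P C (U ∩ C₁) + zConv z P C (U ∩ C₂) := by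
        intro U hU
        have h1 := zConv_transfer hP.1 hPQ hCconv U hU
        have h2 := zConv_transfer hP.1 hPQ hCconv (U ∩ C₁) (Finset.inter_subset_left.trans hU)
        have h3 := zConv_transfer hP.1 hPQ hCconv (U ∩ C₂) (Finset.inter_subset_left.trans hU)
        rw [← h1, ← h2, ← h3]
        exact hdec U hU
      have hPinc := hP.2 C (convexF_mono hPQ hCconv) C₁ C₂ hd hu hdecP
      have hPinc' : ∀ x ∈ C₂, ∀ y ∈ C₁, ¬P.le x y ∧ ¬P.le y x :=
        fun u hu' v hv' => ⟨(hPinc v hv' u hu').2, (hPinc v hv' u hu').1⟩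
      exact ⟨cross_incomp_of_le hPQ hcontr.2 hCconv hd hu hPinc hx hy,
        cross_incomp_of_le hPQ hcontr.2 hCconv hd.symm
          (by rw [Finset.union_comm]; exact hu) hPinc' hy hx⟩
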